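/- Let y ∈ ℝ^n with A(y) > 0 and suppose the Hessian matrix (A_{ij}) = (∂²A/∂y^i∂y^j (y)) is invertible with inverse matrix (A^{ij}). Define the matrices g_{ij} = (A^{2/m−2}/m²)[ m·A·A_{ij} + (2−m)·A_i·A_j ] and g^{ij} = A^{−2/m}[ m·A·A^{ij} + ((m−2)/(m−1))·y^i·y^j ], where A, A_i are evaluated at y. Then (g^{ij}) is the inverse matrix of (g_{ij}), i.e. Σ_k g^{ik} g_{kj} = δ^i_j. -/

import Mathlib

/-- if the Hessian `(A_{ij})` of `A` at `y` is invertible with inverse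
`(A^{ij})`, then `g^{ij} = A^{-2/m}[m·A·A^{ij} + ((m-2)/(m-1))·y^i·y^j]` is the inverse
matrix of `g_{ij} = (A^{2/m-2}/m²)[m·A·A_{ij} + (2-m)·A_i·A_j]`. -/
theorem mth_root_inverse_fundamental_tensor
    {n m : ℕ} (hn : 1 ≤ n) (hm : 2 ≤ m)
    (T : ContinuousMultilinearMap ℝ (fun _ : Fin m => (Fin n → ℝ)) ℝ)
    (hTsymm : ∀ (σ : Equiv.Perm (Fin m)) (v : Fin m → (Fin n → ℝ)), T (v ∘ σ) = T v)
    (A : (Fin n → ℝ) → ℝ)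
    (hA : ∀ y, A y = T (fun _ => y))
    (y : Fin n → ℝ) (hy : 0 < A y)
    (Ainv : Matrix (Fin n) (Fin n) ℝ)
    (hAinv1 : (Matrix.of fun i j =>
        iteratedFDeriv ℝ 2 A y ![Pi.single i 1, Pi.single j 1]) * Ainv = 1)
    (hAinv2 : Ainv * (Matrix.of fun i j =>
        iteratedFDeriv ℝ 2 A y ![Pi.single i 1, Pi.single j 1]) = 1) :
    ∀ i j : Fin n,
      (∑ k : Fin n,
        (A y ^ (-((2 : ℝ) / (m : ℝ))) *
          ((m : ℝ) * A y * Ainv i k + (((m : ℝ) - 2) / ((m : ℝ) - 1)) * y i * y k)) *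
        ((A y ^ ((2 : ℝ) / (m : ℝ) - 2) / (m : ℝ) ^ 2) *
          ((m : ℝ) * A y * iteratedFDeriv ℝ 2 A y ![Pi.single k 1, Pi.single j 1]
            + ((2 : ℝ) - (m : ℝ)) * (fderiv ℝ A y (Pi.single k 1))
              * (fderiv ℝ A y (Pi.single j 1)))))
      = if i = j then 1 else 0 := by
  -- ## Derivative computations
  have hAfun : A = fun x => T (fun _ => x) := funext hA
  have hsmooth : ContDiff ℝ (⊤ : ℕ∞) A := by
    rw [hAfun]; exact T.contDiff.comp (contDiff_pi.2 fun _ => contDiff_id)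
  have hD : ∀ x : Fin n → ℝ, HasFDerivAt A
      (∑ i₀ : Fin m, (T.toContinuousLinearMap (fun _ => x) i₀).comp
        (ContinuousLinearMap.id ℝ (Fin n → ℝ))) x := by
    intro x
    rw [hAfun]
    exact HasFDerivAt.multilinear_comp T (fun _ => hasFDerivAt_id x)
  have hα : ∀ v, fderiv ℝ A y v = ∑ i₀ : Fin m, T (Function.update (fun _ => y) i₀ v) := by
    intro v
    rw [(hD y).fderiv]
    simp
  have hupdate : ∀ (x w : Fin n → ℝ) (i₀ : Fin m),
      (fun j₀ : Fin m => if j₀ = i₀ then w else x) = Function.update (fun _ => x) i₀ w := by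
    intro x w i₀; funext j₀; simp [Function.update_apply]
  have hD2fun : ∀ w : Fin n → ℝ, HasFDerivAt (fun x => fderiv ℝ A x w)
      (∑ i₀ : Fin m, ∑ j₀ : Fin m,
        (T.toContinuousLinearMap (Function.update (fun _ => y) i₀ w) j₀).comp
          (if j₀ = i₀ then 0 else ContinuousLinearMap.id ℝ (Fin n → ℝ))) y := by
    intro w
    have heq : (fun x => fderiv ℝ A x w)
        = fun x => ∑ i₀ : Fin m, T (Function.update (fun _ => x) i₀ w) := by
      funext x
      rw [(hD x).fderiv]; simp
    rw [heq]
    apply HasFDerivAt.fun_sum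
    intro i₀ _
    have h1 : (fun x : Fin n → ℝ => T (Function.update (fun _ => x) i₀ w))
        = fun x => T (fun j₀ => if j₀ = i₀ then w else x) := by
      funext x; rw [hupdate]
    rw [h1]
    have hg : ∀ j₀ : Fin m, HasFDerivAt (fun x : Fin n → ℝ => if j₀ = i₀ then w else x)
        ((if j₀ = i₀ then 0 else ContinuousLinearMap.id ℝ (Fin n → ℝ))) y := by
      intro j₀; by_cases h : j₀ = i₀
      · simp only [if_pos h]; exact hasFDerivAt_const w y
      · simp only [if_neg h]; exact hasFDerivAt_id y
    have := HasFDerivAt.multilinear_comp T hg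
    rw [hupdate] at this
    exact this
  have hdiffA' : DifferentiableAt ℝ (fderiv ℝ A) y := by
    have := (hsmooth.fderiv_right (m := 1)
      (by exact WithTop.coe_le_coe.mpr le_top)).differentiable one_ne_zero
    exact this y
  have hΦapp : ∀ u w, fderiv ℝ (fderiv ℝ A) y u w = ∑ i₀ : Fin m, ∑ j₀ : Fin m,
      (if j₀ = i₀ then 0
        else T (Function.update (Function.update (fun _ => y) i₀ w) j₀ u)) := by
    intro u w
    have h1 : fderiv ℝ (fun x => fderiv ℝ A x w) y = (fderiv ℝ (fderiv ℝ A) y).flip w := by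
      rw [fderiv_clm_apply hdiffA' (differentiableAt_const w)]
      simp
    have h2 := (hD2fun w).fderiv
    have h3 : fderiv ℝ (fderiv ℝ A) y u w = (fderiv ℝ (fderiv ℝ A) y).flip w u := rfl
    rw [h3, ← h1, h2]
    simp only [ContinuousLinearMap.sum_apply, ContinuousLinearMap.comp_apply]
    refine Finset.sum_congr rfl fun i₀ _ => Finset.sum_congr rfl fun j₀ _ => ?_
    by_cases h : j₀ = i₀
    · subst h
      simp only [if_pos rfl, ContinuousLinearMap.zero_apply]
      exact T.map_coord_zero j₀ (Function.update_self _ _ _)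
    · simp [h]
  -- decomposition of y in the standard basis
  have hysum : ∑ k : Fin n, y k • (Pi.single k 1 : Fin n → ℝ) = y := by
    funext t
    simp [Pi.single_apply, Finset.sum_ite_eq']
  -- generic linearity in the basis decomposition of y
  have hlin : ∀ F : (Fin n → ℝ) →L[ℝ] ℝ,
      ∑ k : Fin n, y k * F (Pi.single k 1) = F y := by
    intro F
    have h := map_sum F (fun k => y k • (Pi.single k 1 : Fin n → ℝ)) Finset.univ
    rw [hysum] at h
    rw [h]
    simp
  -- ## Euler identities
  -- E1 : ∑ₖ yₖ ∂ₖA = m A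
  have hE1 : ∑ k : Fin n, y k * fderiv ℝ A y (Pi.single k 1) = (m : ℝ) * A y := by
    rw [hlin (fderiv ℝ A y), hα]
    have h2 : ∀ i₀ : Fin m, T (Function.update (fun _ => y) i₀ y) = A y := by
      intro i₀
      rw [show Function.update (fun _ : Fin m => y) i₀ y = fun _ => y from
        Function.update_eq_self i₀ _, hA]
    rw [Finset.sum_congr rfl fun i₀ _ => h2 i₀]
    simp [Finset.sum_const, mul_comm]
  -- second derivative contracted with y in the first slot
  have hΦy : ∀ w, fderiv ℝ (fderiv ℝ A) y y w = ((m : ℝ) - 1) * fderiv ℝ A y w := by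
    intro w
    rw [hΦapp y w]
    have hinner : ∀ i₀ : Fin m, (∑ j₀ : Fin m, if j₀ = i₀ then (0:ℝ)
        else T (Function.update (Function.update (fun _ => y) i₀ w) j₀ y))
        = ((m : ℝ) - 1) * T (Function.update (fun _ => y) i₀ w) := by
      intro i₀
      have hterm : ∀ j₀ : Fin m, (if j₀ = i₀ then (0:ℝ)
          else T (Function.update (Function.update (fun _ => y) i₀ w) j₀ y))
          = T (Function.update (fun _ => y) i₀ w)
            - (if j₀ = i₀ then T (Function.update (fun _ => y) i₀ w) else 0) := by
        intro j₀
        by_cases h : j₀ = i₀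
        · simp [h]
        · have hv : (Function.update (fun _ : Fin m => y) i₀ w) j₀ = y :=
            Function.update_of_ne h _ _
          have hu : Function.update (Function.update (fun _ => y) i₀ w) j₀ y
              = Function.update (fun _ => y) i₀ w := by
            funext t
            rcases eq_or_ne t j₀ with rfl | ht
            · rw [Function.update_self]; exact hv.symm
            · rw [Function.update_of_ne ht]
          simp [h, hu]
      rw [Finset.sum_congr rfl fun j₀ _ => hterm j₀, Finset.sum_sub_distrib,
        Finset.sum_const, Finset.sum_ite_eq' Finset.univ i₀]
      simp only [Finset.mem_univ, if_true, Finset.card_univ, Fintype.card_fin,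
        nsmul_eq_mul]
      ring
    rw [Finset.sum_congr rfl fun i₀ _ => hinner i₀, ← Finset.mul_sum, hα]
  -- connect the Hessian entries with the second derivative
  have hHΦ : ∀ u w : Fin n → ℝ, iteratedFDeriv ℝ 2 A y ![u, w]
      = fderiv ℝ (fderiv ℝ A) y u w := by
    intro u w
    rw [iteratedFDeriv_two_apply]
    simp
  -- E2 : ∑ₖ yₖ A_{kj} = (m-1) ∂ⱼA
  have hE2 : ∀ l : Fin n, ∑ k : Fin n, y k * iteratedFDeriv ℝ 2 A y ![Pi.single k 1, Pi.single l 1]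
      = ((m : ℝ) - 1) * fderiv ℝ A y (Pi.single l 1) := by
    intro l
    have h1 : ∑ k : Fin n, y k * iteratedFDeriv ℝ 2 A y ![Pi.single k 1, Pi.single l 1]
        = fderiv ℝ (fderiv ℝ A) y y (Pi.single l 1) := by
      have h2 : ∀ k : Fin n, iteratedFDeriv ℝ 2 A y ![Pi.single k 1, Pi.single l 1]
          = ((fderiv ℝ (fderiv ℝ A) y).flip (Pi.single l 1)) (Pi.single k 1) := by
        intro k; rw [hHΦ]; rfl
      rw [Finset.sum_congr rfl fun k _ => by rw [h2 k],
        hlin ((fderiv ℝ (fderiv ℝ A) y).flip (Pi.single l 1))]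
      rfl
    rw [h1, hΦy]
  -- symmetry of the Hessian
  have hsym : ∀ k l : Fin n, iteratedFDeriv ℝ 2 A y ![Pi.single k 1, Pi.single l 1]
      = iteratedFDeriv ℝ 2 A y ![Pi.single l 1, Pi.single k 1] := by
    intro k l
    have hs : IsSymmSndFDerivAt ℝ A y :=
      (hsmooth.contDiffAt).isSymmSndFDerivAt (by rw [minSmoothness_of_isRCLikeNormedField]; exact WithTop.coe_le_coe.mpr le_top)
    rw [hHΦ, hHΦ]
    exact hs _ _
  -- ## Matrix identities
  have hinv : ∀ a b : Fin n, (∑ k : Fin n,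
      Ainv a k * iteratedFDeriv ℝ 2 A y ![Pi.single k 1, Pi.single b 1])
      = if a = b then 1 else 0 := by
    intro a b
    have h := congrFun (congrFun hAinv2 a) b
    rwa [Matrix.mul_apply, Matrix.one_apply] at h
  -- numeric facts
  have hm0 : (m : ℝ) ≠ 0 := by positivity
  have hm1 : (m : ℝ) - 1 ≠ 0 := by
    have : (2 : ℝ) ≤ (m : ℝ) := by exact_mod_cast hm
    linarith
  have ha0 : A y ≠ 0 := ne_of_gt hy
  -- S2 : ∑ₖ Ainv i k ∂ₖ A = yᵢ / (m-1)
  have hS2 : ∀ i : Fin n, ∑ k : Fin n, Ainv i k * fderiv ℝ A y (Pi.single k 1)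
      = y i / ((m : ℝ) - 1) := by
    intro i
    have hαk : ∀ k : Fin n, fderiv ℝ A y (Pi.single k 1)
        = (∑ l : Fin n, y l * iteratedFDeriv ℝ 2 A y ![Pi.single l 1, Pi.single k 1])
          / ((m : ℝ) - 1) := by
      intro k
      rw [hE2 k]
      field_simp
    calc ∑ k : Fin n, Ainv i k * fderiv ℝ A y (Pi.single k 1)
        = ∑ k : Fin n, ∑ l : Fin n, (y l *
            (Ainv i k * iteratedFDeriv ℝ 2 A y ![Pi.single l 1, Pi.single k 1]))
              / ((m : ℝ) - 1) := by
          refine Finset.sum_congr rfl fun k _ => ?_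
          rw [hαk k, Finset.sum_div, Finset.mul_sum]
          refine Finset.sum_congr rfl fun l _ => ?_
          ring
      _ = ∑ l : Fin n, (y l * ∑ k : Fin n,
            Ainv i k * iteratedFDeriv ℝ 2 A y ![Pi.single l 1, Pi.single k 1])
              / ((m : ℝ) - 1) := by
          rw [Finset.sum_comm]
          refine Finset.sum_congr rfl fun l _ => ?_
          rw [Finset.mul_sum, Finset.sum_div]
      _ = y i / ((m : ℝ) - 1) := by
          have : ∀ l : Fin n, ∑ k : Fin n,
              Ainv i k * iteratedFDeriv ℝ 2 A y ![Pi.single l 1, Pi.single k 1]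
              = if i = l then 1 else 0 := by
            intro l
            rw [Finset.sum_congr rfl fun k _ => by rw [hsym l k]]
            exact hinv i l
          rw [Finset.sum_congr rfl fun l _ => by rw [this l], ← Finset.sum_div]
          congr 1
          simp [mul_ite, Finset.sum_ite_eq]
  -- ## Final algebraic computation
  intro i j
  set a : ℝ := A y with hadef
  set p : ℝ := a ^ (-((2 : ℝ) / (m : ℝ))) with hpdef
  set q : ℝ := a ^ ((2 : ℝ) / (m : ℝ) - 2) with hqdef
  have hpq : p * q * a ^ 2 = 1 := by
    have h1 : p * q = a ^ ((-((2 : ℝ) / (m : ℝ))) + ((2 : ℝ) / (m : ℝ) - 2)) :=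
      (Real.rpow_add hy _ _).symm
    have h2 : (-((2 : ℝ) / (m : ℝ))) + ((2 : ℝ) / (m : ℝ) - 2) = (-2 : ℝ) := by ring
    have h3 : a ^ (-2 : ℝ) = (a ^ (2 : ℕ))⁻¹ := by
      rw [Real.rpow_neg hy.le,
        show ((2 : ℝ)) = ((2 : ℕ) : ℝ) by norm_num, Real.rpow_natCast]
    rw [h1, h2, h3]
    field_simp
  set α : Fin n → ℝ := fun k => fderiv ℝ A y (Pi.single k 1) with hαdef
  set H : Fin n → Fin n → ℝ :=
    fun k l => iteratedFDeriv ℝ 2 A y ![Pi.single k 1, Pi.single l 1] with hHdef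
  set C1 : ℝ := (p * ((m : ℝ) * a)) * (q / (m : ℝ) ^ 2 * ((m : ℝ) * a)) with hC1
  set C2 : ℝ := (p * ((m : ℝ) * a)) * (q / (m : ℝ) ^ 2 * (((2 : ℝ) - (m : ℝ)) * α j)) with hC2
  set C3 : ℝ := (p * ((((m : ℝ) - 2) / ((m : ℝ) - 1)) * y i))
      * (q / (m : ℝ) ^ 2 * ((m : ℝ) * a)) with hC3
  set C4 : ℝ := (p * ((((m : ℝ) - 2) / ((m : ℝ) - 1)) * y i))
      * (q / (m : ℝ) ^ 2 * (((2 : ℝ) - (m : ℝ)) * α j)) with hC4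
  have expand : ∀ k : Fin n,
      (p * ((m : ℝ) * a * Ainv i k + (((m : ℝ) - 2) / ((m : ℝ) - 1)) * y i * y k)) *
        ((q / (m : ℝ) ^ 2) * ((m : ℝ) * a * H k j + ((2 : ℝ) - (m : ℝ)) * α k * α j))
      = C1 * (Ainv i k * H k j) + C2 * (Ainv i k * α k)
        + C3 * (y k * H k j) + C4 * (y k * α k) := by
    intro k
    rw [hC1, hC2, hC3, hC4]
    ring
  calc (∑ k : Fin n,
        (p * ((m : ℝ) * a * Ainv i k + (((m : ℝ) - 2) / ((m : ℝ) - 1)) * y i * y k)) *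
        ((q / (m : ℝ) ^ 2) * ((m : ℝ) * a * H k j + ((2 : ℝ) - (m : ℝ)) * α k * α j)))
      = C1 * (∑ k : Fin n, Ainv i k * H k j) + C2 * (∑ k : Fin n, Ainv i k * α k)
        + C3 * (∑ k : Fin n, y k * H k j) + C4 * (∑ k : Fin n, y k * α k) := by
        rw [Finset.sum_congr rfl fun k _ => expand k]
        rw [Finset.sum_add_distrib, Finset.sum_add_distrib, Finset.sum_add_distrib,
          ← Finset.mul_sum, ← Finset.mul_sum, ← Finset.mul_sum, ← Finset.mul_sum]
    _ = C1 * (if i = j then 1 else 0) + C2 * (y i / ((m : ℝ) - 1))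
        + C3 * (((m : ℝ) - 1) * α j) + C4 * ((m : ℝ) * a) := by
        rw [hinv i j, hS2 i, hE2 j, hE1]
    _ = if i = j then 1 else 0 := by
        have hrest : C2 * (y i / ((m : ℝ) - 1)) + C3 * (((m : ℝ) - 1) * α j)
            + C4 * ((m : ℝ) * a) = 0 := by
          rw [hC2, hC3, hC4]
          field_simp
          ring
        have hC1' : C1 = 1 := by
          have h4 : C1 = p * q * a ^ 2 := by
            rw [hC1]; field_simp
          rw [h4, hpq]
        rw [hC1']
        linarith [hrest]
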